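/- Let a < b be real numbers and let f : [a,b] → ℝ be continuous and convex. Then for every x ∈ (a,b), (f(a)+f(b))/2 − (1/(b−a))·∫_a^b f(t) dt ≥ ((x−a)/(b−a))·( (f(a)+f(x))/2 − (1/(x−a))·∫_a^x f(t) dt ) ≥ 0. -/

import Mathlib

open MeasureTheory intervalIntegral

/-- Corollary (c_1): for `f` continuous and convex on `[a,b]`, for all `x ∈ (a,b)`:
`(f(a)+f(b))/2 − (1/(b−a))∫_a^b f ≥ ((x−a)/(b−a))·((f(a)+f(x))/2 − (1/(x−a))∫_a^x f) ≥ 0`. -/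
theorem fejer_stmt_10 (a b : ℝ) (hab : a < b) (f : ℝ → ℝ)
    (hf_cont : ContinuousOn f (Set.Icc a b))
    (hf_conv : ConvexOn ℝ (Set.Icc a b) f)
    (x : ℝ) (hx : x ∈ Set.Ioo a b) :
    (x - a) / (b - a) * ((f a + f x) / 2 - (1 / (x - a)) * (∫ t in a..x, f t))
        ≤ (f a + f b) / 2 - (1 / (b - a)) * (∫ t in a..b, f t) ∧
    0 ≤ (x - a) / (b - a) * ((f a + f x) / 2 - (1 / (x - a)) * (∫ t in a..x, f t)) := by
  obtain ⟨hax, hxb⟩ := hx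
  have hba : (0:ℝ) < b - a := by linarith
  have hxa : (0:ℝ) < x - a := by linarith
  have hint : ∀ c d : ℝ, a ≤ c → d ≤ b → c ≤ d → IntervalIntegrable f volume c d := by
    intro c d hac hdb hcd
    apply ContinuousOn.intervalIntegrable
    apply hf_cont.mono
    rw [Set.uIcc_of_le hcd]
    intro t ht
    exact ⟨by linarith [ht.1], by linarith [ht.2]⟩
  have trap : ∀ c d : ℝ, a ≤ c → c < d → d ≤ b →
      (∫ t in c..d, f t) ≤ (d - c) * (f c + f d) / 2 := by
    intro c d hac hcd hdb
    have hdc : (0:ℝ) < d - c := by linarith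
    have hg : ∀ t ∈ Set.Icc c d, f t ≤ f c + (f d - f c) / (d - c) * (t - c) := by
      intro t ht
      have h1 : (d - t) / (d - c) + (t - c) / (d - c) = 1 := by field_simp; ring
      have h2 := hf_conv.2 (show c ∈ Set.Icc a b from ⟨hac, by linarith⟩)
        (show d ∈ Set.Icc a b from ⟨by linarith, hdb⟩)
        (show (0:ℝ) ≤ (d - t)/(d - c) from div_nonneg (by linarith [ht.2]) hdc.le)
        (show (0:ℝ) ≤ (t - c)/(d - c) from div_nonneg (by linarith [ht.1]) hdc.le)
        h1
      have heq : ((d - t)/(d - c)) • c + ((t - c)/(d - c)) • d = t := by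
        rw [smul_eq_mul, smul_eq_mul, div_mul_eq_mul_div, div_mul_eq_mul_div, ← add_div, div_eq_iff hdc.ne']
        ring
      rw [heq] at h2
      calc f t ≤ ((d - t)/(d - c)) • f c + ((t - c)/(d - c)) • f d := h2
        _ = f c + (f d - f c)/(d - c) * (t - c) := by
            simp only [smul_eq_mul]
            field_simp
            ring
    have hmono := intervalIntegral.integral_mono_on hcd.le (hint c d hac hdb hcd.le)
      (Continuous.intervalIntegrable (by continuity) c d) hg
    have hgi : (∫ t in c..d, (f c + (f d - f c)/(d - c) * (t - c)))
        = (d - c) * (f c + f d) / 2 := by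
      rw [intervalIntegral.integral_add intervalIntegrable_const
        (Continuous.intervalIntegrable (by continuity) c d),
        intervalIntegral.integral_const_mul,
        intervalIntegral.integral_sub (Continuous.intervalIntegrable (by continuity) c d)
          intervalIntegrable_const]
      simp [integral_id]
      field_simp
      ring
    calc (∫ t in c..d, f t) ≤ _ := hmono
      _ = (d - c) * (f c + f d) / 2 := hgi
  have hTx := trap a x le_rfl hax hxb.le
  have hXB := trap x b hax.le hxb le_rfl
  have hchord : (b - a) * f x ≤ (b - x) * f a + (x - a) * f b := by
    have h1 : (b - x) / (b - a) + (x - a) / (b - a) = 1 := by field_simp; ring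
    have h2 := hf_conv.2 (show a ∈ Set.Icc a b from ⟨le_rfl, hab.le⟩)
      (show b ∈ Set.Icc a b from ⟨hab.le, le_rfl⟩)
      (div_nonneg (by linarith) hba.le) (div_nonneg (by linarith) hba.le) h1
    have heq : ((b - x)/(b - a)) • a + ((x - a)/(b - a)) • b = x := by
      rw [smul_eq_mul, smul_eq_mul, div_mul_eq_mul_div, div_mul_eq_mul_div, ← add_div, div_eq_iff hba.ne']
      ring
    rw [heq] at h2
    simp only [smul_eq_mul] at h2
    rw [div_mul_eq_mul_div, div_mul_eq_mul_div, ← add_div,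
      le_div_iff₀ hba] at h2
    nlinarith [h2]
  have hsplit : (∫ t in a..b, f t) = (∫ t in a..x, f t) + ∫ t in x..b, f t :=
    (intervalIntegral.integral_add_adjacent_intervals
      (hint a x le_rfl hxb.le hax.le) (hint x b hax.le le_rfl hxb.le)).symm
  have e1 : (x - a) / (b - a) * ((f a + f x) / 2 - (1 / (x - a)) * (∫ t in a..x, f t))
      = ((x - a) * (f a + f x) / 2 - (∫ t in a..x, f t)) / (b - a) := by
    field_simp
  constructor
  · rw [e1, hsplit]
    have e2 : (f a + f b) / 2 - (1 / (b - a)) * ((∫ t in a..x, f t) + ∫ t in x..b, f t)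
        = ((b - a) * (f a + f b) / 2 - ((∫ t in a..x, f t) + ∫ t in x..b, f t)) / (b - a) := by
      field_simp
    rw [e2, div_le_div_iff_of_pos_right hba]
    nlinarith [hXB, hchord]
  · rw [e1]
    apply div_nonneg _ hba.le
    linarith [hTx]
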